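/- Suppose X_{ℓ−1}, X_ℓ are discrete random variables, Z ∈ ℝ^d satisfies ‖Z‖₂ ≤ B almost surely, X_{ℓ−1} — X_ℓ — Z is a Markov chain, and h(x,y) = E[Z | X_ℓ = x, X_{ℓ−1} = y] exists. If H(X_ℓ | X_{ℓ−1}) < ε, then E[‖E[Z|X_ℓ] − E[Z|X_{ℓ−1}]‖₂²] < 2B²ε, i.e., informational ε-redundancy implies functional (2B²ε)-redundancy. -/

import Mathlib

open MeasureTheory ProbabilityTheory

private lemma poly_ineq {s : ℝ} (hs0 : 0 < s) (hs1 : s ≤ 1) : 2*(1-s^4)^2 ≤ 4*(1-s) := by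
  nlinarith [sq_nonneg (1-s), sq_nonneg (s^2-s), sq_nonneg (s^2+s-1), sq_nonneg (s^3+s^2+s-1),
    mul_nonneg (sub_nonneg.2 hs1) hs0.le, mul_nonneg (mul_nonneg (sub_nonneg.2 hs1) hs0.le) hs0.le,
    sq_nonneg ((1-s)*(1+s+s^2+s^3)), mul_nonneg (sub_nonneg.2 hs1) (sq_nonneg (s^2+s-1)),
    mul_nonneg (sub_nonneg.2 hs1) (sq_nonneg (s^3-s)),
    mul_nonneg (sub_nonneg.2 hs1) (sq_nonneg (s^3+s^2-1))]

private lemma key_ineq {q : ℝ} (hq : 0 < q) (hq1 : q ≤ 1) :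
    2 * (1 - q) ^ 2 ≤ - Real.log q := by
  have hsq : 0 < Real.sqrt q := Real.sqrt_pos.2 hq
  have hs0 : 0 < Real.sqrt (Real.sqrt q) := Real.sqrt_pos.2 hsq
  have hs1 : Real.sqrt (Real.sqrt q) ≤ 1 := by
    rw [show (1:ℝ) = Real.sqrt (Real.sqrt 1) by simp]
    exact Real.sqrt_le_sqrt (Real.sqrt_le_sqrt hq1)
  have hq4 : Real.sqrt (Real.sqrt q) ^ 4 = q := by
    have h2 : Real.sqrt (Real.sqrt q) ^ 2 = Real.sqrt q := Real.sq_sqrt hsq.le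
    calc Real.sqrt (Real.sqrt q) ^ 4 = (Real.sqrt (Real.sqrt q) ^ 2) ^ 2 := by ring
    _ = q := by rw [h2]; exact Real.sq_sqrt hq.le
  have hlog : Real.log q = 4 * Real.log (Real.sqrt (Real.sqrt q)) := by
    conv_lhs => rw [← hq4]
    rw [Real.log_pow]; push_cast; ring
  have hls : Real.log (Real.sqrt (Real.sqrt q)) ≤ Real.sqrt (Real.sqrt q) - 1 :=
    Real.log_le_sub_one_of_pos hs0
  have hpoly := poly_ineq hs0 hs1
  rw [hlog]
  nlinarith [hq4, hpoly, hls]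

private lemma setIntegral_preimage_finset {Ω γ E : Type*} [MeasureSpace Ω] [MeasurableSpace γ]
    [MeasurableSingletonClass γ] [NormedAddCommGroup E] [NormedSpace ℝ E]
    (X : Ω → γ) (hX : Measurable X) {f : Ω → E} (hf : Integrable f ℙ) (t : Finset γ) :
    ∫ ω in X ⁻¹' (t : Set γ), f ω = ∑ b ∈ t, ∫ ω in X ⁻¹' {b}, f ω := by
  have hU : X ⁻¹' (t : Set γ) = ⋃ b ∈ t, X ⁻¹' {b} := by ext ω; simp
  rw [hU, integral_biUnion_finset t (fun b _ => hX (measurableSet_singleton b))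
    ?_ (fun b _ => hf.integrableOn)]
  intro i _ j _ hij
  exact Set.disjoint_left.2 (by simp_all [Set.mem_preimage])

private lemma integrable_comp_discrete {Ω γ E : Type*} [MeasureSpace Ω]
    [IsProbabilityMeasure (ℙ : Measure Ω)] [Fintype γ] [MeasurableSpace γ]
    [MeasurableSingletonClass γ] [NormedAddCommGroup E] [NormedSpace ℝ E]
    [MeasurableSpace E] [BorelSpace E] [SecondCountableTopology E]
    (X : Ω → γ) (hX : Measurable X) (G : γ → E) :
    Integrable (fun ω => G (X ω)) ℙ := by
  have hGm : Measurable G := measurable_of_countable G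
  refine ⟨((hGm.comp hX).stronglyMeasurable).aestronglyMeasurable, ?_⟩
  refine HasFiniteIntegral.of_bounded (C := ∑ b : γ, ‖G b‖) (ae_of_all _ fun ω => ?_)
  exact Finset.single_le_sum (fun b _ => norm_nonneg (G b)) (Finset.mem_univ (X ω))

private lemma integral_comp_discrete {Ω γ E : Type*} [MeasureSpace Ω]
    [IsProbabilityMeasure (ℙ : Measure Ω)] [Fintype γ] [MeasurableSpace γ]
    [MeasurableSingletonClass γ] [NormedAddCommGroup E] [NormedSpace ℝ E]
    [MeasurableSpace E] [BorelSpace E] [SecondCountableTopology E] [CompleteSpace E]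
    (X : Ω → γ) (hX : Measurable X) (G : γ → E) :
    ∫ ω, G (X ω) ∂ℙ = ∑ b : γ, (ℙ (X ⁻¹' {b})).toReal • G b := by
  have hg := integrable_comp_discrete X hX G
  have h1 : ∫ ω, G (X ω) ∂ℙ
      = ∫ ω in X ⁻¹' ((Finset.univ : Finset γ) : Set γ), G (X ω) ∂ℙ := by
    rw [show (X ⁻¹' ((Finset.univ : Finset γ) : Set γ)) = Set.univ by simp,
      Measure.restrict_univ]
  rw [h1, setIntegral_preimage_finset X hX hg Finset.univ]
  refine Finset.sum_congr rfl fun b _ => ?_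
  rw [setIntegral_congr_fun (hX (measurableSet_singleton b)) (fun ω hω => by
    simp only [Set.mem_preimage, Set.mem_singleton_iff] at hω; rw [hω]),
    setIntegral_const, measureReal_def]

/-- `ce X f` is the conditional expectation `E[f | X]`, i.e. the conditional expectation of
`f` with respect to the σ-algebra generated by `X`. -/
noncomputable def ce {Ω γ F : Type*} [MeasureSpace Ω] [MeasurableSpace γ]
    [NormedAddCommGroup F] [NormedSpace ℝ F] [CompleteSpace F]
    (X : Ω → γ) (f : Ω → F) : Ω → F :=
  MeasureTheory.condExp (MeasurableSpace.comap X inferInstance) ℙ f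

private lemma ce_discrete {Ω γ : Type*} [MeasureSpace Ω] [IsProbabilityMeasure (ℙ : Measure Ω)]
    [Fintype γ] [MeasurableSpace γ] [MeasurableSingletonClass γ]
    {d : ℕ} (X : Ω → γ) (hX : Measurable X) (f : Ω → EuclideanSpace ℝ (Fin d))
    (hf : Integrable f ℙ) :
    ce X f =ᵐ[ℙ] fun ω => (ℙ (X ⁻¹' {X ω})).toReal⁻¹ • ∫ a in X ⁻¹' {X ω}, f a := by
  set G : γ → EuclideanSpace ℝ (Fin d) :=
    fun b => (ℙ (X ⁻¹' {b})).toReal⁻¹ • ∫ a in X ⁻¹' {b}, f a with hG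
  have hm : MeasurableSpace.comap X inferInstance ≤ (inferInstance : MeasurableSpace Ω) :=
    hX.comap_le
  haveI : SigmaFinite ((ℙ : Measure Ω).trim hm) := by
    have : IsFiniteMeasure ((ℙ : Measure Ω).trim hm) := isFiniteMeasure_trim hm
    infer_instance
  have hXm : @Measurable Ω γ (MeasurableSpace.comap X inferInstance) _ X :=
    fun s hs => ⟨s, hs, rfl⟩
  have hg : Integrable (fun ω => G (X ω)) ℙ := integrable_comp_discrete X hX G
  have key : ∀ b : γ, ∫ ω in X ⁻¹' {b}, G (X ω) = ∫ ω in X ⁻¹' {b}, f ω := by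
    intro b
    have hcongr : ∫ ω in X ⁻¹' {b}, G (X ω) = ∫ _ω in X ⁻¹' {b}, G b :=
      setIntegral_congr_fun (hX (measurableSet_singleton b)) (fun ω hω => by
        simp only [Set.mem_preimage, Set.mem_singleton_iff] at hω; rw [hω])
    rw [hcongr, setIntegral_const]
    by_cases h0 : ℙ (X ⁻¹' {b}) = 0
    · rw [Measure.restrict_eq_zero.mpr h0, integral_zero_measure, hG]
      simp [h0]
    · have hne : (ℙ (X ⁻¹' {b})).toReal ≠ 0 :=
        ENNReal.toReal_ne_zero.2 ⟨h0, measure_ne_top _ _⟩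
      rw [hG]
      simp only [measureReal_def, smul_smul, mul_inv_cancel₀ hne, one_smul]
  have := ae_eq_condExp_of_forall_setIntegral_eq (μ := ℙ) hm hf
    (fun s _ _ => hg.integrableOn)
    (fun s hs _ => by
      obtain ⟨t, _, rfl⟩ := hs
      have hfin : (X ⁻¹' t) = X ⁻¹' ((t.toFinite.toFinset : Finset γ) : Set γ) := by
        simp
      rw [hfin, setIntegral_preimage_finset X hX hg t.toFinite.toFinset,
        setIntegral_preimage_finset X hX hf t.toFinite.toFinset]
      exact Finset.sum_congr rfl fun b _ => key b)
    (((measurable_of_countable G).comp hXm).stronglyMeasurable.aestronglyMeasurable)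
  exact this.symm

/-- Informational ε-redundancy implies functional (2B²ε)-redundancy: `Xprev = X_{ℓ-1}` and
`Xcur = X_ℓ` are discrete (finitely supported) random variables, `Z` is an `ℝᵈ`-valued random
vector with `‖Z‖ ≤ B` a.s. (where `0 < B`), `X_{ℓ-1} — X_ℓ — Z` is a Markov chain (stated
multiplicatively), and the conditional Shannon entropy `H(X_ℓ | X_{ℓ-1})` (in nats, written
out as a finite sum) is less than `ε`. Then
`E[‖E[Z|X_ℓ] − E[Z|X_{ℓ-1}]‖²] < 2B²ε`. -/
theorem stmt_17 {Ω S T : Type*} [MeasureSpace Ω] [IsProbabilityMeasure (ℙ : Measure Ω)]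
    [Fintype S] [MeasurableSpace S] [MeasurableSingletonClass S]
    [Fintype T] [MeasurableSpace T] [MeasurableSingletonClass T]
    {d : ℕ} (Xprev : Ω → S) (Xcur : Ω → T)
    (hXp : Measurable Xprev) (hXc : Measurable Xcur)
    (Z : Ω → EuclideanSpace ℝ (Fin d)) (hZm : Measurable Z)
    (B : ℝ) (hB0 : 0 < B) (hB : ∀ᵐ ω ∂ℙ, ‖Z ω‖ ≤ B)
    (hMarkov : ∀ (A : Set (EuclideanSpace ℝ (Fin d))), MeasurableSet A → ∀ (a : S) (b : T),
      ℙ (Z ⁻¹' A ∩ Xcur ⁻¹' {b} ∩ Xprev ⁻¹' {a}) * ℙ (Xcur ⁻¹' {b})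
        = ℙ (Z ⁻¹' A ∩ Xcur ⁻¹' {b}) * ℙ (Xcur ⁻¹' {b} ∩ Xprev ⁻¹' {a}))
    (ε : ℝ) (hε : 0 < ε)
    (hH : ∑ a : S, ∑ b : T,
        (ℙ (Xprev ⁻¹' {a} ∩ Xcur ⁻¹' {b})).toReal *
          Real.log ((ℙ (Xprev ⁻¹' {a})).toReal
            / (ℙ (Xprev ⁻¹' {a} ∩ Xcur ⁻¹' {b})).toReal) < ε) :
    ∫ ω, ‖ce Xcur Z ω - ce Xprev Z ω‖ ^ 2 ∂ℙ < 2 * B ^ 2 * ε := by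
  classical
  have hZint : Integrable Z ℙ :=
    ⟨hZm.stronglyMeasurable.aestronglyMeasurable, HasFiniteIntegral.of_bounded hB⟩
  set g : T → EuclideanSpace ℝ (Fin d) :=
    fun b => (ℙ (Xcur ⁻¹' {b})).toReal⁻¹ • ∫ ω in Xcur ⁻¹' {b}, Z ω with hgdef
  set gp : S → EuclideanSpace ℝ (Fin d) :=
    fun a => (ℙ (Xprev ⁻¹' {a})).toReal⁻¹ • ∫ ω in Xprev ⁻¹' {a}, Z ω with hgpdef
  -- norm bound on g
  have hgB : ∀ b : T, ‖g b‖ ≤ B := by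
    intro b
    by_cases h0 : ℙ (Xcur ⁻¹' {b}) = 0
    · rw [hgdef]; simp [h0, hB0.le]
    · have hpos : 0 < (ℙ (Xcur ⁻¹' {b})).toReal :=
        ENNReal.toReal_pos h0 (measure_ne_top _ _)
      have hIb : ‖∫ ω in Xcur ⁻¹' {b}, Z ω‖ ≤ B * (ℙ (Xcur ⁻¹' {b})).toReal :=
        norm_setIntegral_le_of_norm_le_const_ae (measure_lt_top _ _) (ae_restrict_of_ae hB)
      rw [hgdef]
      simp only [norm_smul, Real.norm_eq_abs, abs_of_nonneg (inv_nonneg.2 hpos.le)]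
      calc (ℙ (Xcur ⁻¹' {b})).toReal⁻¹ * ‖∫ ω in Xcur ⁻¹' {b}, Z ω‖
          ≤ (ℙ (Xcur ⁻¹' {b})).toReal⁻¹ * (B * (ℙ (Xcur ⁻¹' {b})).toReal) :=
            mul_le_mul_of_nonneg_left hIb (inv_nonneg.2 hpos.le)
        _ = B := by field_simp
  -- Markov property at the level of integrals
  have hMeq : ∀ (a : S) (b : T),
      (ℙ (Xcur ⁻¹' {b})) • Measure.map Z
          ((ℙ : Measure Ω).restrict (Xcur ⁻¹' {b} ∩ Xprev ⁻¹' {a}))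
        = (ℙ (Xcur ⁻¹' {b} ∩ Xprev ⁻¹' {a})) • Measure.map Z
          ((ℙ : Measure Ω).restrict (Xcur ⁻¹' {b})) := by
    intro a b
    ext A hA
    simp only [Measure.smul_apply, smul_eq_mul]
    rw [Measure.map_apply hZm hA, Measure.map_apply hZm hA,
      Measure.restrict_apply (hZm hA), Measure.restrict_apply (hZm hA)]
    have h := hMarkov A hA a b
    rw [Set.inter_assoc] at h
    calc ℙ (Xcur ⁻¹' {b}) * ℙ (Z ⁻¹' A ∩ (Xcur ⁻¹' {b} ∩ Xprev ⁻¹' {a}))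
        = ℙ (Z ⁻¹' A ∩ (Xcur ⁻¹' {b} ∩ Xprev ⁻¹' {a})) * ℙ (Xcur ⁻¹' {b}) := mul_comm _ _
      _ = ℙ (Z ⁻¹' A ∩ Xcur ⁻¹' {b}) * ℙ (Xcur ⁻¹' {b} ∩ Xprev ⁻¹' {a}) := h
      _ = ℙ (Xcur ⁻¹' {b} ∩ Xprev ⁻¹' {a}) * ℙ (Z ⁻¹' A ∩ Xcur ⁻¹' {b}) := mul_comm _ _
  have hMarkovInt : ∀ (a : S) (b : T),
      (ℙ (Xcur ⁻¹' {b})).toReal • (∫ ω in Xcur ⁻¹' {b} ∩ Xprev ⁻¹' {a}, Z ω)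
        = (ℙ (Xcur ⁻¹' {b} ∩ Xprev ⁻¹' {a})).toReal • ∫ ω in Xcur ⁻¹' {b}, Z ω := by
    intro a b
    have e1 := congrArg (fun ν : Measure (EuclideanSpace ℝ (Fin d)) => ∫ z, z ∂ν) (hMeq a b)
    simp only [integral_smul_measure] at e1
    have h2 : ∀ s : Set Ω, ∫ z, z ∂Measure.map Z ((ℙ : Measure Ω).restrict s)
        = ∫ ω in s, Z ω := fun s =>
      integral_map hZm.aemeasurable aestronglyMeasurable_id
    rw [h2, h2] at e1
    exact e1
  have hI2 : ∀ (a : S) (b : T),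
      ∫ ω in Xprev ⁻¹' {a} ∩ Xcur ⁻¹' {b}, Z ω
        = (ℙ (Xprev ⁻¹' {a} ∩ Xcur ⁻¹' {b})).toReal • g b := by
    intro a b
    rw [Set.inter_comm]
    by_cases h0 : ℙ (Xcur ⁻¹' {b}) = 0
    · have hz : ℙ (Xcur ⁻¹' {b} ∩ Xprev ⁻¹' {a}) = 0 :=
        measure_mono_null Set.inter_subset_left h0
      rw [Measure.restrict_eq_zero.mpr hz, integral_zero_measure, hz]
      simp
    · have hne : (ℙ (Xcur ⁻¹' {b})).toReal ≠ 0 :=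
        ENNReal.toReal_ne_zero.2 ⟨h0, measure_ne_top _ _⟩
      rw [hgdef]
      calc ∫ ω in Xcur ⁻¹' {b} ∩ Xprev ⁻¹' {a}, Z ω
          = (ℙ (Xcur ⁻¹' {b})).toReal⁻¹ •
            ((ℙ (Xcur ⁻¹' {b})).toReal • ∫ ω in Xcur ⁻¹' {b} ∩ Xprev ⁻¹' {a}, Z ω) :=
            (inv_smul_smul₀ hne _).symm
        _ = (ℙ (Xcur ⁻¹' {b})).toReal⁻¹ •
            ((ℙ (Xcur ⁻¹' {b} ∩ Xprev ⁻¹' {a})).toReal • ∫ ω in Xcur ⁻¹' {b}, Z ω) := by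
            rw [hMarkovInt a b]
        _ = (ℙ (Xcur ⁻¹' {b} ∩ Xprev ⁻¹' {a})).toReal •
            ((ℙ (Xcur ⁻¹' {b})).toReal⁻¹ • ∫ ω in Xcur ⁻¹' {b}, Z ω) := smul_comm _ _ _
  -- partition of Xprev fibers
  have hpart : ∀ a : S, Xprev ⁻¹' {a} = ⋃ b : T, (Xprev ⁻¹' {a} ∩ Xcur ⁻¹' {b}) := by
    intro a; ext ω; simp
  have hdisj : ∀ a : S,
      Pairwise (Function.onFun Disjoint fun b : T => Xprev ⁻¹' {a} ∩ Xcur ⁻¹' {b}) := by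
    intro a i j hij
    refine Set.disjoint_left.mpr ?_
    rintro ω ⟨-, hi⟩ ⟨-, hj⟩
    exact hij ((Set.mem_singleton_iff.1 hi).symm.trans (Set.mem_singleton_iff.1 hj))
  have hmeas : ∀ (a : S) (b : T), MeasurableSet (Xprev ⁻¹' {a} ∩ Xcur ⁻¹' {b}) :=
    fun a b => (hXp (measurableSet_singleton a)).inter (hXc (measurableSet_singleton b))
  have hIa : ∀ a : S, ∫ ω in Xprev ⁻¹' {a}, Z ω
      = ∑ b : T, (ℙ (Xprev ⁻¹' {a} ∩ Xcur ⁻¹' {b})).toReal • g b := by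
    intro a
    have h1 := integral_iUnion_fintype (f := Z) (μ := (ℙ : Measure Ω))
      (hmeas a) (hdisj a) (fun b => hZint.integrableOn)
    rw [← hpart a] at h1
    rw [h1]
    exact Finset.sum_congr rfl fun b _ => hI2 a b
  have hsum : ∀ a : S, ∑ b : T, (ℙ (Xprev ⁻¹' {a} ∩ Xcur ⁻¹' {b})).toReal
      = (ℙ (Xprev ⁻¹' {a})).toReal := by
    intro a
    have h1 := measure_iUnion (μ := (ℙ : Measure Ω)) (hdisj a) (hmeas a)
    rw [← hpart a, tsum_fintype] at h1
    rw [← ENNReal.toReal_sum (fun b _ => measure_ne_top _ _), ← h1]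
  have hgp : ∀ a : S, (ℙ (Xprev ⁻¹' {a})).toReal ≠ 0 →
      gp a = ∑ b : T, ((ℙ (Xprev ⁻¹' {a} ∩ Xcur ⁻¹' {b})).toReal
        / (ℙ (Xprev ⁻¹' {a})).toReal) • g b := by
    intro a _
    rw [hgpdef]
    simp only
    rw [hIa a, Finset.smul_sum]
    exact Finset.sum_congr rfl fun b _ => by rw [smul_smul, div_eq_inv_mul]
  -- the term-by-term bound
  have hterm : ∀ (a : S) (b : T),
      (ℙ (Xprev ⁻¹' {a} ∩ Xcur ⁻¹' {b})).toReal * ‖g b - gp a‖ ^ 2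
        ≤ 2 * B ^ 2 * ((ℙ (Xprev ⁻¹' {a} ∩ Xcur ⁻¹' {b})).toReal *
          Real.log ((ℙ (Xprev ⁻¹' {a})).toReal
            / (ℙ (Xprev ⁻¹' {a} ∩ Xcur ⁻¹' {b})).toReal)) := by
    intro a b
    by_cases h0 : ℙ (Xprev ⁻¹' {a} ∩ Xcur ⁻¹' {b}) = 0
    · simp [h0]
    · have hp : 0 < (ℙ (Xprev ⁻¹' {a} ∩ Xcur ⁻¹' {b})).toReal :=
        ENNReal.toReal_pos h0 (measure_ne_top _ _)
      have hple : (ℙ (Xprev ⁻¹' {a} ∩ Xcur ⁻¹' {b})).toReal ≤ (ℙ (Xprev ⁻¹' {a})).toReal :=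
        ENNReal.toReal_mono (measure_ne_top _ _) (measure_mono Set.inter_subset_left)
      have hpa : 0 < (ℙ (Xprev ⁻¹' {a})).toReal := lt_of_lt_of_le hp hple
      set p : ℝ := (ℙ (Xprev ⁻¹' {a} ∩ Xcur ⁻¹' {b})).toReal with hpdef
      set pa : ℝ := (ℙ (Xprev ⁻¹' {a})).toReal with hpadef
      set q : ℝ := p / pa with hqdef
      have hq0 : 0 < q := div_pos hp hpa
      have hq1 : q ≤ 1 := (div_le_one hpa).2 hple
      have hqsum : ∑ b' : T, ((ℙ (Xprev ⁻¹' {a} ∩ Xcur ⁻¹' {b'})).toReal / pa) = 1 := by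
        rw [← Finset.sum_div, hsum a, ← hpadef, div_self hpa.ne']
      -- convex combination bound
      have hnorm : ‖g b - gp a‖ ≤ 2 * B * (1 - q) := by
        rw [hgp a hpa.ne']
        have hcomb : g b - ∑ b' : T, ((ℙ (Xprev ⁻¹' {a} ∩ Xcur ⁻¹' {b'})).toReal / pa) • g b'
            = ∑ b' : T, ((ℙ (Xprev ⁻¹' {a} ∩ Xcur ⁻¹' {b'})).toReal / pa) • (g b - g b') := by
          simp_rw [smul_sub]
          rw [Finset.sum_sub_distrib, ← Finset.sum_smul, hqsum, one_smul]
        rw [hcomb]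
        have hbnd : ∀ b' : T,
            ((ℙ (Xprev ⁻¹' {a} ∩ Xcur ⁻¹' {b'})).toReal / pa) * ‖g b - g b'‖
              ≤ ((ℙ (Xprev ⁻¹' {a} ∩ Xcur ⁻¹' {b'})).toReal / pa) * (2 * B) := by
          intro b'
          refine mul_le_mul_of_nonneg_left ?_ (div_nonneg ENNReal.toReal_nonneg hpa.le)
          calc ‖g b - g b'‖ ≤ ‖g b‖ + ‖g b'‖ := norm_sub_le _ _
            _ ≤ 2 * B := by have := hgB b; have := hgB b'; linarith
        calc ‖∑ b' : T, ((ℙ (Xprev ⁻¹' {a} ∩ Xcur ⁻¹' {b'})).toReal / pa) • (g b - g b')‖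
            ≤ ∑ b' : T, ‖((ℙ (Xprev ⁻¹' {a} ∩ Xcur ⁻¹' {b'})).toReal / pa) • (g b - g b')‖ :=
              norm_sum_le _ _
          _ = ∑ b' : T, ((ℙ (Xprev ⁻¹' {a} ∩ Xcur ⁻¹' {b'})).toReal / pa) * ‖g b - g b'‖ := by
              refine Finset.sum_congr rfl fun b' _ => ?_
              rw [norm_smul, Real.norm_eq_abs,
                abs_of_nonneg (div_nonneg ENNReal.toReal_nonneg hpa.le)]
          _ = ∑ b' ∈ Finset.univ.erase b,
                ((ℙ (Xprev ⁻¹' {a} ∩ Xcur ⁻¹' {b'})).toReal / pa) * ‖g b - g b'‖ := by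
              rw [← Finset.add_sum_erase _ _ (Finset.mem_univ b)]
              simp
          _ ≤ ∑ b' ∈ Finset.univ.erase b,
                ((ℙ (Xprev ⁻¹' {a} ∩ Xcur ⁻¹' {b'})).toReal / pa) * (2 * B) :=
              Finset.sum_le_sum fun b' _ => hbnd b'
          _ = (∑ b' ∈ Finset.univ.erase b,
                ((ℙ (Xprev ⁻¹' {a} ∩ Xcur ⁻¹' {b'})).toReal / pa)) * (2 * B) :=
              (Finset.sum_mul _ _ _).symm
          _ = (1 - q) * (2 * B) := by
              rw [Finset.sum_erase_eq_sub (Finset.mem_univ b), hqsum, hqdef, hpdef]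
          _ = 2 * B * (1 - q) := by ring
      have hnormsq : ‖g b - gp a‖ ^ 2 ≤ (2 * B * (1 - q)) ^ 2 :=
        pow_le_pow_left₀ (norm_nonneg _) hnorm 2
      have hkey := key_ineq hq0 hq1
      have hlog : Real.log (pa / p) = - Real.log q := by
        rw [hqdef, ← Real.log_inv, inv_div]
      rw [hlog]
      calc p * ‖g b - gp a‖ ^ 2 ≤ p * (2 * B * (1 - q)) ^ 2 :=
            mul_le_mul_of_nonneg_left hnormsq hp.le
        _ = (2 * (1 - q) ^ 2) * (2 * B ^ 2 * p) := by ring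
        _ ≤ (- Real.log q) * (2 * B ^ 2 * p) :=
            mul_le_mul_of_nonneg_right hkey (by positivity)
        _ = 2 * B ^ 2 * (p * (- Real.log q)) := by ring
  -- identify the integral with the double sum
  have hce1 := ce_discrete Xcur hXc Z hZint
  have hce2 := ce_discrete Xprev hXp Z hZint
  have hInt1 : ∫ ω, ‖ce Xcur Z ω - ce Xprev Z ω‖ ^ 2 ∂ℙ
      = ∫ ω, ‖g (Xcur ω) - gp (Xprev ω)‖ ^ 2 ∂ℙ := by
    refine integral_congr_ae ?_
    filter_upwards [hce1, hce2] with ω h1 h2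
    rw [h1, h2, hgdef, hgpdef]
  have hInt2 : ∫ ω, ‖g (Xcur ω) - gp (Xprev ω)‖ ^ 2 ∂ℙ
      = ∑ x : S × T, (ℙ ((fun ω => (Xprev ω, Xcur ω)) ⁻¹' {x})).toReal •
          ‖g x.2 - gp x.1‖ ^ 2 :=
    integral_comp_discrete (fun ω => (Xprev ω, Xcur ω)) (hXp.prodMk hXc)
      (fun x => ‖g x.2 - gp x.1‖ ^ 2)
  have hWpre : ∀ (a : S) (b : T),
      (fun ω => (Xprev ω, Xcur ω)) ⁻¹' {(a, b)} = Xprev ⁻¹' {a} ∩ Xcur ⁻¹' {b} := by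
    intro a b; ext ω; simp [Prod.ext_iff]
  have hInt3 : ∫ ω, ‖ce Xcur Z ω - ce Xprev Z ω‖ ^ 2 ∂ℙ
      = ∑ a : S, ∑ b : T, (ℙ (Xprev ⁻¹' {a} ∩ Xcur ⁻¹' {b})).toReal * ‖g b - gp a‖ ^ 2 := by
    rw [hInt1, hInt2, Fintype.sum_prod_type]
    refine Finset.sum_congr rfl fun a _ => Finset.sum_congr rfl fun b _ => ?_
    rw [hWpre a b, smul_eq_mul]
  rw [hInt3]
  calc ∑ a : S, ∑ b : T, (ℙ (Xprev ⁻¹' {a} ∩ Xcur ⁻¹' {b})).toReal * ‖g b - gp a‖ ^ 2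
      ≤ ∑ a : S, ∑ b : T, 2 * B ^ 2 * ((ℙ (Xprev ⁻¹' {a} ∩ Xcur ⁻¹' {b})).toReal *
          Real.log ((ℙ (Xprev ⁻¹' {a})).toReal
            / (ℙ (Xprev ⁻¹' {a} ∩ Xcur ⁻¹' {b})).toReal)) :=
        Finset.sum_le_sum fun a _ => Finset.sum_le_sum fun b _ => hterm a b
    _ = 2 * B ^ 2 * ∑ a : S, ∑ b : T, ((ℙ (Xprev ⁻¹' {a} ∩ Xcur ⁻¹' {b})).toReal *
          Real.log ((ℙ (Xprev ⁻¹' {a})).toReal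
            / (ℙ (Xprev ⁻¹' {a} ∩ Xcur ⁻¹' {b})).toReal)) := by
        simp_rw [Finset.mul_sum]
    _ < 2 * B ^ 2 * ε := by
        exact mul_lt_mul_of_pos_left hH (by positivity)
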